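/- Let U = (U_1,...,U_m) be a random vector with uniform [0,1] margins whose pairwise tail-dependence coefficients exist and form the m×m matrix Λ, and let V = (V_1,...,V_d) be a random vector with uniform [0,1] margins whose pairwise tail-dependence coefficients exist and form the identity matrix I_d (i.e., λ_{ij} = 0 for i ≠ j). Let X be a random d×m matrix with entries in {0,1} such that each row of X has at most one entry equal to 1, with X, U, V independent. Set Z_i = 1 − Σ_{k=1}^m X_{ik} and Y_i = Σ_{k=1}^m X_{ik} U_k + Z_i V_i for i = 1,...,d. Then Y = (Y_1,...,Y_d) has uniform [0,1] margins, its pairwise tail-dependence coefficients exist, and for all i ≠ j they equal (E[X Λ Xᵀ])_{ij}; that is, the tail-dependence matrix of Y is obtained from E[X Λ Xᵀ] by replacing all diagonal entries with 1 (Theorem 4.2). -/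

import Mathlib

open MeasureTheory ProbabilityTheory Filter Set

noncomputable section

/-- A Bernoulli-compatible matrix: `B i j = E[X i * X j]` for some random vector `X`
taking values in `{0,1}^d` on some probability space. -/
def IsBernoulliCompatible {d : ℕ} (B : Matrix (Fin d) (Fin d) ℝ) : Prop :=
  ∃ (Ω : Type) (_ : MeasurableSpace Ω) (μ : Measure Ω),
    IsProbabilityMeasure μ ∧
    ∃ X : Ω → Fin d → ℝ, Measurable X ∧
      (∀ ω i, X ω i = 0 ∨ X ω i = 1) ∧
      (∀ i j, B i j = ∫ ω, X ω i * X ω j ∂μ)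

/-- The (lower) tail-dependence coefficient of `Yi` and `Yj` exists and equals `l`:
`P(Yi ≤ u, Yj ≤ u)/u → l` as `u ↓ 0`. -/
def HasTailDepCoeff {Ω : Type} [MeasurableSpace Ω] (μ : Measure Ω)
    (Yi Yj : Ω → ℝ) (l : ℝ) : Prop :=
  Filter.Tendsto (fun u : ℝ => (μ {ω | Yi ω ≤ u ∧ Yj ω ≤ u}).toReal / u)
    (nhdsWithin 0 (Set.Ioi 0)) (nhds l)

/-- The uniform distribution on `[0,1]`. -/
def stdUniform : Measure ℝ := volume.restrict (Set.Icc (0:ℝ) 1)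

/-- A tail-dependence matrix: the matrix of pairwise (lower) tail-dependence coefficients
of some random vector with standard uniform margins. -/
def IsTailDependenceMatrix {d : ℕ} (Λ : Matrix (Fin d) (Fin d) ℝ) : Prop :=
  ∃ (Ω : Type) (_ : MeasurableSpace Ω) (μ : Measure Ω),
    IsProbabilityMeasure μ ∧
    ∃ Y : Ω → Fin d → ℝ, Measurable Y ∧
      (∀ i, μ.map (fun ω => Y ω i) = stdUniform) ∧
      (∀ i j, HasTailDepCoeff μ (fun ω => Y ω i) (fun ω => Y ω j) (Λ i j))

/- ### Auxiliary definitions and lemmas -/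

open Topology

lemma stdUniform_Iic {u : ℝ} (h1 : u ≤ 1) :
    stdUniform (Iic u) = ENNReal.ofReal u := by
  rw [stdUniform, Measure.restrict_apply measurableSet_Iic]
  rcases le_or_gt 0 u with h0 | h0
  · have : Iic u ∩ Icc (0:ℝ) 1 = Icc 0 u := by
      ext x; simp only [mem_inter_iff, mem_Iic, mem_Icc]
      constructor
      · rintro ⟨h, h2, _⟩; exact ⟨h2, h⟩
      · rintro ⟨h2, h⟩; exact ⟨h, h2, h.trans h1⟩
    rw [this, Real.volume_Icc, sub_zero]
  · have : Iic u ∩ Icc (0:ℝ) 1 = ∅ := by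
      ext x; simp only [mem_inter_iff, mem_Iic, mem_Icc, mem_empty_iff_false, iff_false]
      rintro ⟨h, h2, _⟩; linarith
    rw [this, measure_empty, ENNReal.ofReal_of_nonpos h0.le]

lemma stdUniform_univ : stdUniform univ = 1 := by
  rw [stdUniform, Measure.restrict_apply_univ, Real.volume_Icc]; norm_num

instance : IsProbabilityMeasure stdUniform := ⟨stdUniform_univ⟩

/-- The event on the `X`-matrix: row `i` has its `1` at `k` (for `some k`), or no `1` at all. -/
def SAset {d m : ℕ} (i : Fin d) : Option (Fin m) → Set (Fin d → Fin m → ℝ)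
  | some k => {M | M i k = 1}
  | none => {M | ∀ k, M i k ≠ 1}

/-- The `U`-event corresponding to index `a`. -/
def TUset {m : ℕ} (u : ℝ) : Option (Fin m) → Set (Fin m → ℝ)
  | some k => {v | v k ≤ u}
  | none => Set.univ

/-- The `V`-event corresponding to index `a`. -/
def TVset {d m : ℕ} (i : Fin d) (u : ℝ) : Option (Fin m) → Set (Fin d → ℝ)
  | some _ => Set.univ
  | none => {v | v i ≤ u}

lemma SAset_meas {d m : ℕ} (i : Fin d) (a : Option (Fin m)) : MeasurableSet (SAset i a) := by
  cases a with
  | some k => exact measurableSet_eq_fun (by fun_prop) measurable_const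
  | none =>
    have : (SAset (m := m) i none) = ⋂ k, {M : Fin d → Fin m → ℝ | M i k = 1}ᶜ := by
      ext M; simp [SAset]
    rw [this]
    exact MeasurableSet.iInter fun k =>
      (measurableSet_eq_fun (by fun_prop) measurable_const).compl

lemma TUset_meas {m : ℕ} (u : ℝ) (a : Option (Fin m)) : MeasurableSet (TUset u a) := by
  cases a with
  | some k => exact measurableSet_le (by fun_prop) measurable_const
  | none => exact MeasurableSet.univ

lemma TVset_meas {d m : ℕ} (i : Fin d) (u : ℝ) (a : Option (Fin m)) :
    MeasurableSet (TVset (m := m) i u a) := by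
  cases a with
  | some k => exact MeasurableSet.univ
  | none => exact measurableSet_le (by fun_prop) measurable_const

/-- The decomposition piece for the joint event `{Y i ≤ u, Y j ≤ u}`. -/
def termSet {d m : ℕ} {Ω : Type} (X : Ω → Fin d → Fin m → ℝ) (U : Ω → Fin m → ℝ)
    (V : Ω → Fin d → ℝ) (i j : Fin d) (p : Option (Fin m) × Option (Fin m)) (u : ℝ) : Set Ω :=
  X ⁻¹' (SAset i p.1 ∩ SAset j p.2) ∩ U ⁻¹' (TUset u p.1 ∩ TUset u p.2)
    ∩ V ⁻¹' (TVset i u p.1 ∩ TVset j u p.2)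

/-- The limit contribution of each decomposition piece. -/
def Lfun {d m : ℕ} {Ω : Type} [MeasurableSpace Ω] (μ : Measure Ω)
    (X : Ω → Fin d → Fin m → ℝ) (Λ : Matrix (Fin m) (Fin m) ℝ) (i j : Fin d) :
    Option (Fin m) × Option (Fin m) → ℝ
  | (some k, some l) => (μ (X ⁻¹' (SAset i (some k) ∩ SAset j (some l)))).toReal * Λ k l
  | (some _, none) => 0
  | (none, _) => 0

/-- Theorem 4.2: if `U` has uniform margins and tail-dependence matrix `Λ`, `V` has uniform
margins and tail-dependence matrix `I_d`, `X` is a random `{0,1}`-matrix whose rows each have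
at most one `1`, with `X, U, V` independent, and
`Y i = ∑ k, X i k * U k + (1 - ∑ k, X i k) * V i`, then `Y` has uniform margins and its
tail-dependence matrix is `E[X Λ Xᵀ]` with the diagonal entries replaced by `1`. -/
theorem tail_dependence_of_mixture {d m : ℕ}
    (Ω : Type) [MeasurableSpace Ω] (μ : Measure Ω) [IsProbabilityMeasure μ]
    (U : Ω → Fin m → ℝ) (V : Ω → Fin d → ℝ) (X : Ω → Fin d → Fin m → ℝ)
    (hUmeas : Measurable U) (hVmeas : Measurable V) (hXmeas : Measurable X)
    (Λ : Matrix (Fin m) (Fin m) ℝ)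
    (hUmarg : ∀ k, μ.map (fun ω => U ω k) = stdUniform)
    (hUtail : ∀ k l, HasTailDepCoeff μ (fun ω => U ω k) (fun ω => U ω l) (Λ k l))
    (hVmarg : ∀ i, μ.map (fun ω => V ω i) = stdUniform)
    (hVtail : ∀ i j, HasTailDepCoeff μ (fun ω => V ω i) (fun ω => V ω j)
      ((1 : Matrix (Fin d) (Fin d) ℝ) i j))
    (hX01 : ∀ ω i k, X ω i k = 0 ∨ X ω i k = 1)
    (hXrow : ∀ ω i, (∑ k, X ω i k) ≤ 1)
    (hindep₁ : ProbabilityTheory.IndepFun X U μ)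
    (hindep₂ : ProbabilityTheory.IndepFun (fun ω => (X ω, U ω)) V μ)
    (Y : Ω → Fin d → ℝ)
    (hY : ∀ ω i, Y ω i = (∑ k, X ω i k * U ω k) + (1 - ∑ k, X ω i k) * V ω i) :
    (∀ i, μ.map (fun ω => Y ω i) = stdUniform) ∧
    (∀ i j, HasTailDepCoeff μ (fun ω => Y ω i) (fun ω => Y ω j)
      (if i = j then 1 else ∫ ω, ∑ k, ∑ l, X ω i k * Λ k l * X ω j l ∂μ)) := by
  classical
  -- basic pointwise facts
  have hnn : ∀ ω i k, 0 ≤ X ω i k := fun ω i k => by rcases hX01 ω i k with h | h <;> simp [h]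
  have hone : ∀ ω i (k l : Fin m), X ω i k = 1 → X ω i l = 1 → k = l := by
    intro ω i k l hk hl
    by_contra hne
    have hmono := Finset.sum_le_sum_of_subset_of_nonneg
      (Finset.subset_univ ({k, l} : Finset (Fin m))) (fun x _ _ => hnn ω i x)
    rw [Finset.sum_pair hne, hk, hl] at hmono
    linarith [hXrow ω i]
  have hzero_of : ∀ ω i (k l : Fin m), X ω i k = 1 → l ≠ k → X ω i l = 0 := by
    intro ω i k l hk hl
    rcases hX01 ω i l with h | h
    · exact h
    · exact absurd (hone ω i l k h hk) hl
  have hYsome : ∀ ω i (k : Fin m), X ω i k = 1 → Y ω i = U ω k := by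
    intro ω i k hk
    have hs : ∑ l, X ω i l * U ω l = U ω k := by
      rw [Finset.sum_eq_single k]
      · rw [hk, one_mul]
      · intro l _ hl; rw [hzero_of ω i k l hk hl, zero_mul]
      · simp
    have hs1 : ∑ l, X ω i l = 1 := by
      rw [Finset.sum_eq_single k]
      · exact hk
      · intro l _ hl; exact hzero_of ω i k l hk hl
      · simp
    rw [hY, hs, hs1]; ring
  have hYnone : ∀ ω i, (∀ k, X ω i k ≠ 1) → Y ω i = V ω i := by
    intro ω i h
    have hz : ∀ k, X ω i k = 0 := fun k => (hX01 ω i k).resolve_right (h k)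
    have hs : ∑ l, X ω i l * U ω l = 0 := Finset.sum_eq_zero fun l _ => by rw [hz l, zero_mul]
    have hs1 : ∑ l, X ω i l = 0 := Finset.sum_eq_zero fun l _ => hz l
    rw [hY, hs, hs1]; ring
  -- membership characterization
  have hmem : ∀ ω i (u : ℝ), Y ω i ≤ u →
      ∃ a, X ω ∈ SAset i a ∧ U ω ∈ TUset u a ∧ V ω ∈ TVset i u a := by
    intro ω i u hu
    by_cases h : ∃ k, X ω i k = 1
    · obtain ⟨k, hk⟩ := h
      refine ⟨some k, hk, ?_, trivial⟩
      show U ω k ≤ u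
      rw [← hYsome ω i k hk]; exact hu
    · push_neg at h
      refine ⟨none, h, trivial, ?_⟩
      show V ω i ≤ u
      rw [← hYnone ω i h]; exact hu
  have hle : ∀ ω i (u : ℝ) a, X ω ∈ SAset i a → U ω ∈ TUset u a → V ω ∈ TVset i u a →
      Y ω i ≤ u := by
    intro ω i u a ha hU hV
    cases a with
    | some k => rw [hYsome ω i k ha]; exact hU
    | none => rw [hYnone ω i ha]; exact hV
  have hdisjmem : ∀ ω i (a b : Option (Fin m)), X ω ∈ SAset i a → X ω ∈ SAset i b → a = b := by
    intro ω i a b ha hb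
    cases a with
    | some k =>
      cases b with
      | some l => exact congrArg some (hone ω i k l ha hb)
      | none => exact absurd ha (hb k)
    | none =>
      cases b with
      | some l => exact absurd hb (ha l)
      | none => rfl
  -- independence factorization
  have hfact : ∀ (S : Set (Fin d → Fin m → ℝ)) (T : Set (Fin m → ℝ)) (T' : Set (Fin d → ℝ)),
      MeasurableSet S → MeasurableSet T → MeasurableSet T' →
      μ (X ⁻¹' S ∩ U ⁻¹' T ∩ V ⁻¹' T') = μ (X ⁻¹' S) * μ (U ⁻¹' T) * μ (V ⁻¹' T') := by
    intro S T T' hS hT hT'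
    have h1 : X ⁻¹' S ∩ U ⁻¹' T = (fun ω => (X ω, U ω)) ⁻¹' (S ×ˢ T) := rfl
    rw [h1, hindep₂.measure_inter_preimage_eq_mul _ _ (hS.prod hT) hT', ← h1,
      hindep₁.measure_inter_preimage_eq_mul _ _ hS hT]
  -- marginal probabilities
  have hUu : ∀ (k : Fin m) (u : ℝ), μ (U ⁻¹' TUset u (some k)) = stdUniform (Iic u) := by
    intro k u
    have h1 : U ⁻¹' TUset u (some k) = (fun ω => U ω k) ⁻¹' (Iic u) := rfl
    rw [h1, ← Measure.map_apply (by fun_prop) measurableSet_Iic, hUmarg k]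
  have hVu : ∀ (i : Fin d) (u : ℝ), μ (V ⁻¹' TVset (m := m) i u none) = stdUniform (Iic u) := by
    intro i u
    have h1 : V ⁻¹' TVset (m := m) i u none = (fun ω => V ω i) ⁻¹' (Iic u) := rfl
    rw [h1, ← Measure.map_apply (by fun_prop) measurableSet_Iic, hVmarg i]
  have hYm : ∀ i, Measurable fun ω => Y ω i := by
    intro i
    have h1 : (fun ω => Y ω i) =
        fun ω => (∑ k, X ω i k * U ω k) + (1 - ∑ k, X ω i k) * V ω i := funext fun ω => hY ω i
    rw [h1]; fun_prop
  -- the marginal claim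
  have hYmarg : ∀ i, μ.map (fun ω => Y ω i) = stdUniform := by
    intro i
    haveI hfin : IsFiniteMeasure (μ.map fun ω => Y ω i) :=
      ⟨by rw [Measure.map_apply (hYm i) MeasurableSet.univ]; simp⟩
    refine MeasureTheory.Measure.ext_of_Iic _ _ fun t => ?_
    rw [Measure.map_apply (hYm i) measurableSet_Iic]
    have hdec : (fun ω => Y ω i) ⁻¹' Iic t =
        ⋃ a : Option (Fin m), X ⁻¹' SAset i a ∩ U ⁻¹' TUset t a ∩ V ⁻¹' TVset i t a := by
      ext ω
      simp only [mem_preimage, mem_Iic, mem_iUnion, mem_inter_iff]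
      constructor
      · intro h; obtain ⟨a, h1, h2, h3⟩ := hmem ω i t h; exact ⟨a, ⟨h1, h2⟩, h3⟩
      · rintro ⟨a, ⟨h1, h2⟩, h3⟩; exact hle ω i t a h1 h2 h3
    rw [hdec, measure_iUnion ?_ ?_]
    · rw [tsum_fintype]
      have hterm : ∀ a : Option (Fin m),
          μ (X ⁻¹' SAset i a ∩ U ⁻¹' TUset t a ∩ V ⁻¹' TVset i t a)
            = μ (X ⁻¹' SAset i a) * stdUniform (Iic t) := by
        intro a
        rw [hfact _ _ _ (SAset_meas i a) (TUset_meas t a) (TVset_meas i t a)]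
        cases a with
        | some k =>
          rw [hUu k t]
          have : V ⁻¹' TVset (m := m) i t (some k) = univ := rfl
          rw [this, measure_univ, mul_one]
        | none =>
          rw [hVu i t]
          have : U ⁻¹' TUset t (none : Option (Fin m)) = univ := rfl
          rw [this, measure_univ, mul_one]
      rw [Finset.sum_congr rfl fun a _ => hterm a, ← Finset.sum_mul]
      have hcover : (⋃ a : Option (Fin m), X ⁻¹' SAset i a) = univ := by
        ext ω
        simp only [mem_iUnion, mem_univ, iff_true, mem_preimage]
        by_cases h : ∃ k, X ω i k = 1
        · obtain ⟨k, hk⟩ := h; exact ⟨some k, hk⟩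
        · push_neg at h; exact ⟨none, h⟩
      have hsum1 : ∑ a : Option (Fin m), μ (X ⁻¹' SAset i a) = 1 := by
        rw [← tsum_fintype (L := .unconditional _), ← measure_iUnion ?_ (fun a => hXmeas (SAset_meas i a)), hcover,
          measure_univ]
        intro a b hab
        exact Set.disjoint_left.mpr fun ω ha hb => hab (hdisjmem ω i a b ha hb)
      rw [hsum1, one_mul]
    · intro a b hab
      refine Set.disjoint_left.mpr fun ω ha hb => hab ?_
      exact hdisjmem ω i a b ha.1.1 hb.1.1
    · intro a
      exact ((hXmeas (SAset_meas i a)).inter (hUmeas (TUset_meas t a))).inter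
        (hVmeas (TVset_meas i t a))
  refine ⟨hYmarg, ?_⟩
  intro i j
  by_cases hij : i = j
  · subst hij
    rw [if_pos rfl]
    show Tendsto (fun u : ℝ => (μ {ω | Y ω i ≤ u ∧ Y ω i ≤ u}).toReal / u) (𝓝[>] 0) (𝓝 1)
    have hev : ∀ᶠ u in 𝓝[>] (0:ℝ),
        (1:ℝ) = (μ {ω | Y ω i ≤ u ∧ Y ω i ≤ u}).toReal / u := by
      filter_upwards [Ioo_mem_nhdsGT_of_mem (by norm_num : (0:ℝ) ∈ Ico (0:ℝ) 1)] with u hu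
      have h1 : {ω | Y ω i ≤ u ∧ Y ω i ≤ u} = (fun ω => Y ω i) ⁻¹' Iic u := by
        ext ω; simp [mem_Iic]
      rw [h1, ← Measure.map_apply (hYm i) measurableSet_Iic, hYmarg i, stdUniform_Iic hu.2.le,
        ENNReal.toReal_ofReal hu.1.le, div_self hu.1.ne']
    exact Tendsto.congr' hev tendsto_const_nhds
  · rw [if_neg hij]
    -- pointwise indicator identity
    have hptwise : ∀ ω (k l : Fin m), X ω i k * Λ k l * X ω j l =
        (X ⁻¹' (SAset i (some k) ∩ SAset j (some l))).indicator (fun _ => Λ k l) ω := by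
      intro ω k l
      rcases hX01 ω i k with h1 | h1
      · rw [h1, zero_mul, zero_mul, Set.indicator_of_notMem]
        intro hmem'
        have : X ω i k = 1 := hmem'.1
        rw [h1] at this; norm_num at this
      · rcases hX01 ω j l with h2 | h2
        · rw [h2, mul_zero, Set.indicator_of_notMem]
          intro hmem'
          have : X ω j l = 1 := hmem'.2
          rw [h2] at this; norm_num at this
        · rw [h1, h2, one_mul, mul_one, Set.indicator_of_mem
            (show ω ∈ X ⁻¹' (SAset i (some k) ∩ SAset j (some l)) from ⟨h1, h2⟩)]
    have hInt : ∀ (k l : Fin m), Integrable (fun ω => X ω i k * Λ k l * X ω j l) μ := by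
      intro k l
      have heq : (fun ω => X ω i k * Λ k l * X ω j l) =
          (X ⁻¹' (SAset i (some k) ∩ SAset j (some l))).indicator (fun _ => Λ k l) :=
        funext fun ω => hptwise ω k l
      rw [heq]
      exact (integrable_const _).indicator
        (hXmeas ((SAset_meas i (some k)).inter (SAset_meas j (some l))))
    have hIntegral : ∫ ω, ∑ k, ∑ l, X ω i k * Λ k l * X ω j l ∂μ
        = ∑ k, ∑ l, (μ (X ⁻¹' (SAset i (some k) ∩ SAset j (some l)))).toReal * Λ k l := by
      rw [integral_finset_sum _ (fun k _ => integrable_finset_sum _ (fun l _ => hInt k l))]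
      refine Finset.sum_congr rfl fun k _ => ?_
      rw [integral_finset_sum _ (fun l _ => hInt k l)]
      refine Finset.sum_congr rfl fun l _ => ?_
      calc ∫ ω, X ω i k * Λ k l * X ω j l ∂μ
          = ∫ ω, (X ⁻¹' (SAset i (some k) ∩ SAset j (some l))).indicator (fun _ => Λ k l) ω ∂μ :=
            integral_congr_ae (ae_of_all _ fun ω => hptwise ω k l)
        _ = (μ (X ⁻¹' (SAset i (some k) ∩ SAset j (some l)))).toReal * Λ k l := by
            rw [integral_indicator_const _
              (hXmeas ((SAset_meas i (some k)).inter (SAset_meas j (some l)))), smul_eq_mul, measureReal_def]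
    -- decomposition of the joint event
    have hsetdec : ∀ u : ℝ, {ω | Y ω i ≤ u ∧ Y ω j ≤ u}
        = ⋃ p : Option (Fin m) × Option (Fin m), termSet X U V i j p u := by
      intro u
      ext ω
      simp only [mem_setOf_eq, mem_iUnion, termSet, mem_inter_iff, mem_preimage]
      constructor
      · rintro ⟨h1, h2⟩
        obtain ⟨a, ha1, ha2, ha3⟩ := hmem ω i u h1
        obtain ⟨b, hb1, hb2, hb3⟩ := hmem ω j u h2
        exact ⟨(a, b), ⟨⟨ha1, hb1⟩, ha2, hb2⟩, ha3, hb3⟩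
      · rintro ⟨⟨a, b⟩, ⟨⟨ha1, hb1⟩, ha2, hb2⟩, ha3, hb3⟩
        exact ⟨hle ω i u a ha1 ha2 ha3, hle ω j u b hb1 hb2 hb3⟩
    have htermmeas : ∀ (p : Option (Fin m) × Option (Fin m)) (u : ℝ),
        MeasurableSet (termSet X U V i j p u) := by
      intro p u
      exact ((hXmeas ((SAset_meas i p.1).inter (SAset_meas j p.2))).inter
        (hUmeas ((TUset_meas u p.1).inter (TUset_meas u p.2)))).inter
        (hVmeas ((TVset_meas i u p.1).inter (TVset_meas j u p.2)))
    have hμdec : ∀ u : ℝ, μ {ω | Y ω i ≤ u ∧ Y ω j ≤ u}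
        = ∑ p : Option (Fin m) × Option (Fin m), μ (termSet X U V i j p u) := by
      intro u
      rw [hsetdec u, measure_iUnion ?_ (fun p => htermmeas p u), tsum_fintype]
      intro p q hpq
      refine Set.disjoint_left.mpr fun ω hp hq => hpq ?_
      obtain ⟨⟨hp1, _⟩, _⟩ := hp
      obtain ⟨⟨hq1, _⟩, _⟩ := hq
      exact Prod.ext (hdisjmem ω i p.1 q.1 hp1.1 hq1.1) (hdisjmem ω j p.2 q.2 hp1.2 hq1.2)
    -- factorized form of each term
    have hfacterm : ∀ (a b : Option (Fin m)) (u : ℝ),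
        (μ (termSet X U V i j (a, b) u)).toReal
          = (μ (X ⁻¹' (SAset i a ∩ SAset j b))).toReal *
            ((μ (U ⁻¹' (TUset u a ∩ TUset u b))).toReal *
             (μ (V ⁻¹' (TVset i u a ∩ TVset j u b))).toReal) := by
      intro a b u
      have ht : termSet X U V i j (a, b) u
          = X ⁻¹' (SAset i a ∩ SAset j b) ∩ U ⁻¹' (TUset u a ∩ TUset u b)
            ∩ V ⁻¹' (TVset i u a ∩ TVset j u b) := rfl
      rw [ht, hfact _ _ _ ((SAset_meas i a).inter (SAset_meas j b))
        ((TUset_meas u a).inter (TUset_meas u b))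
        ((TVset_meas i u a).inter (TVset_meas j u b)),
        ENNReal.toReal_mul, ENNReal.toReal_mul, mul_assoc]
    -- per-piece limits
    have hterm : ∀ p : Option (Fin m) × Option (Fin m),
        Tendsto (fun u : ℝ => (μ (termSet X U V i j p u)).toReal / u) (𝓝[>] 0)
          (𝓝 (Lfun μ X Λ i j p)) := by
      rintro ⟨a, b⟩
      match a, b with
      | some k, some l =>
        have heq : (fun u : ℝ => (μ (termSet X U V i j (some k, some l) u)).toReal / u)
            = fun u => (μ (X ⁻¹' (SAset i (some k) ∩ SAset j (some l)))).toReal *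
                ((μ {ω | U ω k ≤ u ∧ U ω l ≤ u}).toReal / u) := by
          funext u
          rw [hfacterm (some k) (some l) u]
          have h1 : V ⁻¹' (TVset (m := m) i u (some k) ∩ TVset j u (some l)) = univ := by
            simp [TVset]
          have h2 : U ⁻¹' (TUset u (some k) ∩ TUset u (some l))
              = {ω | U ω k ≤ u ∧ U ω l ≤ u} := rfl
          rw [h1, h2, measure_univ, ENNReal.toReal_one, mul_one, mul_div_assoc]
        rw [heq]
        have hL : Lfun μ X Λ i j (some k, some l)
            = (μ (X ⁻¹' (SAset i (some k) ∩ SAset j (some l)))).toReal * Λ k l := rfl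
        rw [hL]
        exact (hUtail k l).const_mul _
      | some k, none =>
        have hev : ∀ᶠ u in 𝓝[>] (0:ℝ),
            (μ (X ⁻¹' (SAset i (some k) ∩ SAset j (none : Option (Fin m))))).toReal * u
              = (μ (termSet X U V i j (some k, none) u)).toReal / u := by
          filter_upwards [Ioo_mem_nhdsGT_of_mem (by norm_num : (0:ℝ) ∈ Ico (0:ℝ) 1)] with u hu
          rw [hfacterm (some k) none u]
          have h1 : U ⁻¹' (TUset u (some k) ∩ TUset u (none : Option (Fin m)))
              = U ⁻¹' TUset u (some k) := by simp [TUset]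
          have h2 : V ⁻¹' (TVset (m := m) i u (some k) ∩ TVset (m := m) j u none)
              = V ⁻¹' TVset (m := m) j u none := by simp [TVset]
          rw [h1, h2, hUu k u, hVu j u, stdUniform_Iic hu.2.le,
            ENNReal.toReal_ofReal hu.1.le, mul_div_assoc, mul_self_div_self]
        have hL : Lfun μ X Λ i j ((some k : Option (Fin m)), (none : Option (Fin m))) = 0 := rfl
        rw [hL]
        refine Tendsto.congr' hev ?_
        have hid : Tendsto (fun u : ℝ => u) (𝓝[>] (0:ℝ)) (𝓝 0) :=
          tendsto_id.mono_left nhdsWithin_le_nhds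
        simpa using hid.const_mul
          (μ (X ⁻¹' (SAset i (some k) ∩ SAset j (none : Option (Fin m))))).toReal
      | none, some l =>
        have hev : ∀ᶠ u in 𝓝[>] (0:ℝ),
            (μ (X ⁻¹' (SAset i (none : Option (Fin m)) ∩ SAset j (some l)))).toReal * u
              = (μ (termSet X U V i j (none, some l) u)).toReal / u := by
          filter_upwards [Ioo_mem_nhdsGT_of_mem (by norm_num : (0:ℝ) ∈ Ico (0:ℝ) 1)] with u hu
          rw [hfacterm none (some l) u]
          have h1 : U ⁻¹' (TUset u (none : Option (Fin m)) ∩ TUset u (some l))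
              = U ⁻¹' TUset u (some l) := by simp [TUset]
          have h2 : V ⁻¹' (TVset (m := m) i u none ∩ TVset (m := m) j u (some l))
              = V ⁻¹' TVset (m := m) i u none := by simp [TVset]
          rw [h1, h2, hUu l u, hVu i u, stdUniform_Iic hu.2.le,
            ENNReal.toReal_ofReal hu.1.le, mul_div_assoc, mul_self_div_self]
        have hL : Lfun μ X Λ i j ((none : Option (Fin m)), (some l : Option (Fin m))) = 0 := rfl
        rw [hL]
        refine Tendsto.congr' hev ?_
        have hid : Tendsto (fun u : ℝ => u) (𝓝[>] (0:ℝ)) (𝓝 0) :=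
          tendsto_id.mono_left nhdsWithin_le_nhds
        simpa using hid.const_mul
          (μ (X ⁻¹' (SAset i (none : Option (Fin m)) ∩ SAset j (some l)))).toReal
      | none, none =>
        have heq : (fun u : ℝ => (μ (termSet X U V i j (none, none) u)).toReal / u)
            = fun u => (μ (X ⁻¹' (SAset i (none : Option (Fin m))
                ∩ SAset j (none : Option (Fin m))))).toReal *
                ((μ {ω | V ω i ≤ u ∧ V ω j ≤ u}).toReal / u) := by
          funext u
          rw [hfacterm none none u]
          have h1 : U ⁻¹' (TUset u (none : Option (Fin m)) ∩ TUset u none) = univ := by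
            simp [TUset]
          have h2 : V ⁻¹' (TVset (m := m) i u none ∩ TVset (m := m) j u none)
              = {ω | V ω i ≤ u ∧ V ω j ≤ u} := rfl
          rw [h1, h2, measure_univ, ENNReal.toReal_one, one_mul, mul_div_assoc]
        rw [heq]
        have hL : Lfun μ X Λ i j ((none : Option (Fin m)), (none : Option (Fin m))) = 0 := rfl
        rw [hL]
        have h3 := (hVtail i j).const_mul
          (μ (X ⁻¹' (SAset i (none : Option (Fin m)) ∩ SAset j (none : Option (Fin m))))).toReal
        simpa [Matrix.one_apply_ne hij] using h3
    -- assemble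
    have hkey : Tendsto (fun u : ℝ => (μ {ω | Y ω i ≤ u ∧ Y ω j ≤ u}).toReal / u) (𝓝[>] 0)
        (𝓝 (∑ p : Option (Fin m) × Option (Fin m), Lfun μ X Λ i j p)) := by
      have heq : (fun u : ℝ => (μ {ω | Y ω i ≤ u ∧ Y ω j ≤ u}).toReal / u)
          = fun u => ∑ p : Option (Fin m) × Option (Fin m),
              (μ (termSet X U V i j p u)).toReal / u := by
        funext u
        rw [hμdec u, ENNReal.toReal_sum (fun p _ => measure_ne_top μ _), Finset.sum_div]
      rw [heq]
      exact tendsto_finset_sum _ fun p _ => hterm p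
    have hsumL : ∑ p : Option (Fin m) × Option (Fin m), Lfun μ X Λ i j p
        = ∫ ω, ∑ k, ∑ l, X ω i k * Λ k l * X ω j l ∂μ := by
      rw [hIntegral, Fintype.sum_prod_type, Fintype.sum_option]
      have hnone : ∑ b : Option (Fin m), Lfun μ X Λ i j (none, b) = 0 :=
        Finset.sum_eq_zero fun b _ => by cases b <;> rfl
      rw [hnone, zero_add]
      refine Finset.sum_congr rfl fun k _ => ?_
      rw [Fintype.sum_option]
      have h0 : Lfun μ X Λ i j (some k, none) = 0 := rfl
      rw [h0, zero_add]
      exact Finset.sum_congr rfl fun l _ => rfl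
    rw [← hsumL]
    exact hkey
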